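/- If α ≥ 1 + √3, then φ''(2) ≤ 0 for the Morse potential with r₀ = 1 + (1/α)·log((1+2e^{-α})/(1+2e^{-2α})). -/

import Mathlib

/-- Equilibrium distance parameter of the Morse potential. -/
noncomputable def morseR0 (α : ℝ) : ℝ :=
  1 + (1 / α) * Real.log ((1 + 2 * Real.exp (-α)) / (1 + 2 * Real.exp (-2 * α)))

/-- The (shifted) Morse potential with stiffness α and shift φ₀. -/
noncomputable def morse (α φ₀ : ℝ) (r : ℝ) : ℝ :=
  Real.exp (-2 * α * (r - morseR0 α)) - 2 * Real.exp (-α * (r - morseR0 α)) - φ₀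

lemma morse_hasDerivAt (α φ₀ r : ℝ) :
    HasDerivAt (morse α φ₀)
      (-2 * α * Real.exp (-2 * α * (r - morseR0 α))
        + 2 * α * Real.exp (-α * (r - morseR0 α))) r := by
  have h1 : HasDerivAt (fun r : ℝ => -2 * α * (r - morseR0 α)) (-2 * α) r := by
    simpa using ((hasDerivAt_id r).sub_const (morseR0 α)).const_mul (-2 * α)
  have h2 : HasDerivAt (fun r : ℝ => -α * (r - morseR0 α)) (-α) r := by
    simpa using ((hasDerivAt_id r).sub_const (morseR0 α)).const_mul (-α)
  have h := (h1.exp.sub (h2.exp.const_mul 2)).sub_const φ₀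
  exact h.congr_deriv (by ring)

lemma morse_deriv (α φ₀ : ℝ) :
    deriv (morse α φ₀) = fun r =>
      -2 * α * Real.exp (-2 * α * (r - morseR0 α))
        + 2 * α * Real.exp (-α * (r - morseR0 α)) := by
  funext r
  exact (morse_hasDerivAt α φ₀ r).deriv

lemma morse_deriv2 (α φ₀ r : ℝ) :
    deriv (deriv (morse α φ₀)) r =
      4 * α ^ 2 * Real.exp (-2 * α * (r - morseR0 α))
        - 2 * α ^ 2 * Real.exp (-α * (r - morseR0 α)) := by
  rw [morse_deriv]
  have h1 : HasDerivAt (fun r : ℝ => -2 * α * (r - morseR0 α)) (-2 * α) r := by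
    simpa using ((hasDerivAt_id r).sub_const (morseR0 α)).const_mul (-2 * α)
  have h2 : HasDerivAt (fun r : ℝ => -α * (r - morseR0 α)) (-α) r := by
    simpa using ((hasDerivAt_id r).sub_const (morseR0 α)).const_mul (-α)
  have h := (h1.exp.const_mul (-2 * α)).add (h2.exp.const_mul (2 * α))
  refine h.deriv.trans ?_
  ring

/-- if α ≥ 1 + √3 then φ''(2) ≤ 0. -/
theorem stmt_18 (α φ₀ : ℝ) (hα : 1 + Real.sqrt 3 ≤ α) :
    deriv (deriv (morse α φ₀)) 2 ≤ 0 := by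
  rw [morse_deriv2]
  have h3 : (1 : ℝ) ≤ Real.sqrt 3 := by
    rw [show (1:ℝ) = Real.sqrt 1 by simp]
    exact Real.sqrt_le_sqrt (by norm_num)
  have hα2 : (2 : ℝ) ≤ α := by linarith
  have hαpos : (0 : ℝ) < α := by linarith
  set t := Real.exp (-α) with ht
  have htpos : 0 < t := Real.exp_pos _
  have ht4 : t ≤ 1 / 4 := by
    have : Real.exp (-α) ≤ Real.exp (-2) := Real.exp_le_exp.2 (by linarith)
    have h2 : Real.exp (-2) ≤ 1 / 4 := by
      have he : Real.exp 2 = Real.exp 1 * Real.exp 1 := by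
        rw [← Real.exp_add]; norm_num
      have h9 := Real.exp_one_gt_d9
      rw [Real.exp_neg, inv_le_iff_one_le_mul₀ (Real.exp_pos 2)]
      nlinarith
    linarith
  have hden : (0 : ℝ) < 1 + 2 * Real.exp (-2 * α) := by positivity
  have hnum : (0 : ℝ) < 1 + 2 * Real.exp (-α) := by positivity
  -- compute E₁ = exp(-α(2 - r₀)) = e^{-α} * (1+2e^{-α})/(1+2e^{-2α})
  have hE1 : Real.exp (-α * (2 - morseR0 α)) =
      t * ((1 + 2 * Real.exp (-α)) / (1 + 2 * Real.exp (-2 * α))) := by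
    have : -α * (2 - morseR0 α) = -α +
        Real.log ((1 + 2 * Real.exp (-α)) / (1 + 2 * Real.exp (-2 * α))) := by
      unfold morseR0
      field_simp
      ring
    rw [this, Real.exp_add, Real.exp_log (by positivity)]
  have hE2 : Real.exp (-2 * α * (2 - morseR0 α)) =
      Real.exp (-α * (2 - morseR0 α)) ^ 2 := by
    rw [← Real.exp_nat_mul]
    ring_nf
  set E := Real.exp (-α * (2 - morseR0 α)) with hE
  have hEpos : 0 < E := Real.exp_pos _
  -- key: 2E ≤ 1
  have he2 : Real.exp (-2 * α) = t ^ 2 := by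
    rw [ht, ← Real.exp_nat_mul]; ring_nf
  have hkey : 2 * E ≤ 1 := by
    rw [hE1, ← ht, he2]
    rw [he2] at hden
    rw [mul_div_assoc' , mul_div_assoc', div_le_one hden]
    nlinarith
  rw [hE2]
  nlinarith [mul_nonneg (mul_nonneg (sq_nonneg α) hEpos.le) (by linarith : (0:ℝ) ≤ 1 - 2 * E)]
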